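/- For any fixed constant c > 0, the probability that the Erdős–Rényi random graph G(n, (c·ln n)/n) is not locally sparse is O(n^{−4}). -/

import Mathlib

open MeasureTheory Finset

attribute [local instance] Classical.propDecidable

set_option maxHeartbeats 800000

noncomputable section RankSparse

/-- Bernoulli measure on `Bool` with success probability `p`. -/
def bern (p : ℝ) : Measure Bool :=
  (Real.toNNReal p) • Measure.dirac true + (Real.toNNReal (1 - p)) • Measure.dirac false

instance (p : ℝ) : IsFiniteMeasure (bern p) := by unfold bern; infer_instance

/-- Product measure: i.i.d. Bernoulli(p) entries indexed by pairs `(i,j)`. -/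
def entriesMeasure (n : ℕ) (p : ℝ) : Measure (Fin n → Fin n → Bool) :=
  Measure.pi fun _ => Measure.pi fun _ => bern p

/-- The random sparsified symmetric matrix `Q(W,p)`: for `i ≤ j`,
`q_{ij} = w_{ij} ξ_{ij}` with `ξ_{ij}` Bernoulli, and `q_{ji} = q_{ij}`. -/
def QW {n : ℕ} (W : Matrix (Fin n) (Fin n) ℂ) (ω : Fin n → Fin n → Bool) :
    Matrix (Fin n) (Fin n) ℂ :=
  Matrix.of fun i j =>
    if i ≤ j then (if ω i j then W i j else 0) else (if ω j i then W j i else 0)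

/-- The adjacency relation of the graph `G(Q)` of a symmetric matrix:
`i` adjacent to `j` iff `q_{ij} ≠ 0` (self-loops allowed). -/
def adjOf {n : ℕ} (Q : Matrix (Fin n) (Fin n) ℂ) : Fin n → Fin n → Prop :=
  fun i j => Q i j ≠ 0

/-- The neighborhood `N(S)` of a vertex set: all vertices adjacent to at
least one vertex of `S` (may intersect `S`). -/
def nbr {n : ℕ} (A : Fin n → Fin n → Prop) (S : Finset (Fin n)) : Finset (Fin n) :=
  univ.filter fun v => ∃ u ∈ S, A u v

/-- `S` is non-expanding if `|N(S)| < |S|`. -/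
def nonExpanding {n : ℕ} (A : Fin n → Fin n → Prop) (S : Finset (Fin n)) : Prop :=
  (nbr A S).card < S.card

/-- Minimally non-expanding: non-expanding with no proper non-expanding subset. -/
def minNonExpanding {n : ℕ} (A : Fin n → Fin n → Prop) (S : Finset (Fin n)) : Prop :=
  nonExpanding A S ∧ ∀ T ⊂ S, ¬ nonExpanding A T

/-- Degree of a vertex: number of its neighbors (a loop makes `v` its own neighbor). -/
def deg {n : ℕ} (A : Fin n → Fin n → Prop) (v : Fin n) : ℕ :=
  (univ.filter fun u => A v u).card

/-- A set is unobstructed if it contains no non-expanding subset. -/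
def unobstructed {n : ℕ} (A : Fin n → Fin n → Prop) (S : Finset (Fin n)) : Prop :=
  ∀ T ⊆ S, ¬ nonExpanding A T

/-- A set is `t`-unobstructed if it contains no non-expanding subset of size at most `t`. -/
def tUnobstructed {n : ℕ} (t : ℕ) (A : Fin n → Fin n → Prop) (S : Finset (Fin n)) : Prop :=
  ∀ T ⊆ S, T.card ≤ t → ¬ nonExpanding A T

/-- Maximum size of an unobstructed vertex set. -/
def maxUnobstructed {n : ℕ} (A : Fin n → Fin n → Prop) : ℕ :=
  ((univ : Finset (Finset (Fin n))).filter fun S => unobstructed A S).sup Finset.card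

/-- Maximum size of a `t`-unobstructed vertex set. -/
def maxTUnobstructed {n : ℕ} (t : ℕ) (A : Fin n → Fin n → Prop) : ℕ :=
  ((univ : Finset (Finset (Fin n))).filter fun S => tUnobstructed t A S).sup Finset.card

/-- A symmetric matrix is `t`-saturated if its rank equals the maximum size of a
`t`-unobstructed set of vertices of its graph. -/
def saturated (t : ℕ) {n : ℕ} (Q : Matrix (Fin n) (Fin n) ℂ) : Prop :=
  Q.rank = maxTUnobstructed t (adjOf Q)

/-- `min_{S} (n - |S| + |N(S)|)` over all vertex subsets of `G(Q)`. -/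
def rankFormula {n : ℕ} (Q : Matrix (Fin n) (Fin n) ℂ) : ℕ :=
  (univ : Finset (Finset (Fin n))).inf' univ_nonempty
    fun S => n - S.card + (nbr (adjOf Q) S).card

/-- The induced graph on the vertex set `S` is connected. -/
def connOn {n : ℕ} (A : Fin n → Fin n → Prop) (S : Finset (Fin n)) : Prop :=
  ∀ u ∈ S, ∀ v ∈ S, Relation.ReflTransGen (fun a b => a ∈ S ∧ b ∈ S ∧ A a b) u v

/-- There is a cycle of length `ℓ` through `v` (a cycle of length 1 is a self-loop). -/
def cycleThrough {n : ℕ} (A : Fin n → Fin n → Prop) (ℓ : ℕ) (v : Fin n) : Prop :=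
  ∃ f : ZMod ℓ → Fin n, Function.Injective f ∧ (∀ i, A (f i) (f (i + 1))) ∧ ∃ i, f i = v

/-- Well-separated graph (for parameters `N`, the ambient size, and `s`):
(W1) every connected subgraph on at most `5s` vertices has at most `s-1` vertices of
degree at most `ln ln N`; (W2) no cycle of length 1 or of length between 3 and `12 s`
contains a vertex of degree at most `ln ln N`. -/
def wellSeparated (N s : ℕ) {n : ℕ} (A : Fin n → Fin n → Prop) : Prop :=
  (∀ S : Finset (Fin n), S.card ≤ 5 * s → connOn A S →
      (S.filter fun v => (deg A v : ℝ) ≤ Real.log (Real.log N)).card ≤ s - 1) ∧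
  (∀ v : Fin n, (deg A v : ℝ) ≤ Real.log (Real.log N) →
      ∀ ℓ : ℕ, (ℓ = 1 ∨ (3 ≤ ℓ ∧ ℓ ≤ 12 * s)) → ¬ cycleThrough A ℓ v)

/-- Number of edges joining `S` to its complement. -/
def crossEdges {n : ℕ} (A : Fin n → Fin n → Prop) (S : Finset (Fin n)) : ℕ :=
  (univ.filter fun e : Fin n × Fin n => e.1 ∈ S ∧ e.2 ∉ S ∧ A e.1 e.2).card

/-- Small set expander (for ambient size `N` and parameter `s`). -/
def smallSetExpander (N s : ℕ) {n : ℕ} (A : Fin n → Fin n → Prop) : Prop :=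
  ∀ S : Finset (Fin n), (S.card : ℝ) ≤ (N : ℝ) / (Real.log N) ^ ((3:ℝ)/2) →
    (S.card ≤ crossEdges A S ∨
      ∃ S' ⊆ S, S'.card ≤ s - 1 ∧ crossEdges A S' < S'.card)

/-- Number of edges induced on `S` (counting loops once). -/
def inducedEdges {n : ℕ} (A : Fin n → Fin n → Prop) (S : Finset (Fin n)) : ℕ :=
  (univ.filter fun e : Fin n × Fin n => e.1 ∈ S ∧ e.2 ∈ S ∧ e.1 ≤ e.2 ∧ A e.1 e.2).card

/-- Locally sparse: every nonempty set of at most `N/(ln N)^{3/2}` vertices induces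
fewer than `4|S|` edges (i.e. has average degree less than 8). -/
def locallySparse (N : ℕ) {n : ℕ} (A : Fin n → Fin n → Prop) : Prop :=
  ∀ S : Finset (Fin n), S.Nonempty → (S.card : ℝ) ≤ (N : ℝ) / (Real.log N) ^ ((3:ℝ)/2) →
    inducedEdges A S < 4 * S.card

/-- `S` is nice: at least two vertices are each adjacent to exactly one vertex of `S`. -/
def nice {n : ℕ} (A : Fin n → Fin n → Prop) (S : Finset (Fin n)) : Prop :=
  2 ≤ (univ.filter fun v => (S.filter fun u => A v u).card = 1).card

/-- `S` is nearly nice: at least one vertex is adjacent to exactly one vertex of `S`. -/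
def nearlyNice {n : ℕ} (A : Fin n → Fin n → Prop) (S : Finset (Fin n)) : Prop :=
  1 ≤ (univ.filter fun v => (S.filter fun u => A v u).card = 1).card

/-- A good graph (for ambient size `N`, parameter `s` and probability `p`; here
`k = ln ln N / (2p)`). -/
def goodGraph (N s : ℕ) (p : ℝ) {n : ℕ} (A : Fin n → Fin n → Prop) : Prop :=
  (∀ S : Finset (Fin n), S.Nonempty → ¬ nice A S → (∀ T ⊂ S, T.Nonempty → nice A T) →
      (Real.log (Real.log N) / (2 * p) + 1 ≤ (S.card : ℝ) ∨
        ∃ T ⊆ S, T.card ≤ s - 1 ∧ nonExpanding A T)) ∧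
  (∀ S : Finset (Fin n), S.Nonempty → ¬ nearlyNice A S →
      (∀ T ⊂ S, T.Nonempty → nearlyNice A T) →
      (Real.log (Real.log N) / (2 * p) + 1 ≤ (S.card : ℝ) ∨
        (S.card ≤ s - 1 ∧ nonExpanding A S))) ∧
  (((univ.filter fun v : Fin n => deg A v < s).card : ℝ) ≤ 1 / (p * Real.log N)) ∧
  wellSeparated N s A

/-- A symmetric matrix is good if its graph is good. -/
def goodMatrix (N s : ℕ) (p : ℝ) {n : ℕ} (Q : Matrix (Fin n) (Fin n) ℂ) : Prop :=
  goodGraph N s p (adjOf Q)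

/-- The upper-left `min m n × min m n` minor of a matrix. -/
def minor {n : ℕ} (Q : Matrix (Fin n) (Fin n) ℂ) (m : ℕ) :
    Matrix (Fin (min m n)) (Fin (min m n)) ℂ :=
  Q.submatrix (Fin.castLE (min_le_right m n)) (Fin.castLE (min_le_right m n))

end RankSparse

/-- The Erdős–Rényi adjacency relation obtained from i.i.d. Bernoulli edge
indicators (no loops): `i ~ j` iff `i ≠ j` and the indicator of the unordered
pair `{i,j}` is on. -/
def erAdj {n : ℕ} (ω : Fin n → Fin n → Bool) : Fin n → Fin n → Prop :=
  fun i j => i ≠ j ∧ (if i ≤ j then ω i j else ω j i) = true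



section SparsenessAux
open Filter Asymptotics
open scoped ENNReal

lemma bern_true (p : ℝ) : bern p {true} = ENNReal.ofReal p := by
  simp [bern, Measure.dirac_apply', MeasurableSet.of_discrete, ENNReal.ofReal, ENNReal.smul_def, -Measure.coe_nnreal_smul]

lemma bern_univ (p : ℝ) (h0 : 0 ≤ p) (h1 : p ≤ 1) : bern p Set.univ = 1 := by
  simp [bern, ENNReal.ofReal, ENNReal.smul_def, -Measure.coe_nnreal_smul]
  rw [← ENNReal.coe_add, ← Real.toNNReal_add h0 (by linarith)]
  norm_num

lemma cyl_measure (n : ℕ) (p : ℝ) (h0 : 0 ≤ p) (h1 : p ≤ 1) (E : Finset (Fin n × Fin n)) :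
    entriesMeasure n p {ω | ∀ e ∈ E, ω e.1 e.2 = true} = ENNReal.ofReal p ^ E.card := by
  have hset : {ω : Fin n → Fin n → Bool | ∀ e ∈ E, ω e.1 e.2 = true}
      = Set.pi Set.univ (fun i => Set.pi Set.univ
          (fun j => if (i, j) ∈ E then ({true} : Set Bool) else Set.univ)) := by
    ext ω
    simp only [Set.mem_setOf_eq, Set.mem_pi, Set.mem_univ, forall_true_left]
    constructor
    · intro h i j
      split_ifs with he
      · exact h (i, j) he
      · trivial
    · intro h e he
      have := h e.1 e.2
      rw [if_pos he] at this
      exact this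
  rw [hset]
  unfold entriesMeasure
  rw [Measure.pi_pi]
  have : ∀ i : Fin n, (Measure.pi fun _ : Fin n => bern p)
      (Set.pi Set.univ (fun j => if (i, j) ∈ E then ({true} : Set Bool) else Set.univ))
      = ∏ j : Fin n, (if (i, j) ∈ E then ENNReal.ofReal p else 1) := by
    intro i
    rw [Measure.pi_pi]
    congr 1; ext j
    split_ifs
    · exact bern_true p
    · exact bern_univ p h0 h1
  simp_rw [this]
  rw [← Finset.prod_product']
  have : ∀ e ∈ (univ : Finset (Fin n × Fin n)), (if e ∈ E then ENNReal.ofReal p else 1) = (if e ∈ E then ENNReal.ofReal p else 1) := fun _ _ => rfl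
  calc (∏ e : Fin n × Fin n, if e ∈ E then ENNReal.ofReal p else 1)
      = ∏ e ∈ E, ENNReal.ofReal p := by rw [Finset.prod_ite_mem, Finset.univ_inter]
    _ = ENNReal.ofReal p ^ E.card := Finset.prod_const _

lemma pow_self_le_exp_mul_factorial : ∀ k : ℕ, (k : ℝ) ^ k ≤ Real.exp k * k.factorial := by
  intro k
  induction k with
  | zero => simp
  | succ k ih =>
    have hk : ((k:ℝ)+1) ^ k ≤ Real.exp 1 * (k:ℝ)^k := by
      rcases Nat.eq_zero_or_pos k with h | h
      · subst h; simp [Real.one_le_exp]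
      · have hkpos : (0:ℝ) < k := by exact_mod_cast h
        have h1 : ((k:ℝ)+1) ≤ (k:ℝ) * Real.exp (1/k) := by
          have := Real.add_one_le_exp (1/(k:ℝ))
          calc ((k:ℝ)+1) = (k:ℝ) * (1/(k:ℝ) + 1) := by field_simp; ring
            _ ≤ (k:ℝ) * Real.exp (1/k) := by
                apply mul_le_mul_of_nonneg_left this hkpos.le
        calc ((k:ℝ)+1) ^ k ≤ ((k:ℝ) * Real.exp (1/k)) ^ k := by
              apply pow_le_pow_left₀ (by positivity) h1
          _ = (k:ℝ)^k * Real.exp (1/k) ^ k := mul_pow _ _ _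
          _ = (k:ℝ)^k * Real.exp 1 := by
              rw [← Real.exp_nat_mul]
              congr 2
              field_simp
          _ = Real.exp 1 * (k:ℝ)^k := mul_comm _ _
    have hfact : ((k+1:ℕ) : ℝ) ^ (k+1) = ((k:ℝ)+1) * ((k:ℝ)+1)^k := by
      push_cast; ring
    calc ((k+1:ℕ) : ℝ) ^ (k+1) = ((k:ℝ)+1) * ((k:ℝ)+1)^k := hfact
      _ ≤ ((k:ℝ)+1) * (Real.exp 1 * (k:ℝ)^k) := by
          apply mul_le_mul_of_nonneg_left hk (by positivity)
      _ ≤ ((k:ℝ)+1) * (Real.exp 1 * (Real.exp k * k.factorial)) := by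
          apply mul_le_mul_of_nonneg_left (by apply mul_le_mul_of_nonneg_left ih (by positivity)) (by positivity)
      _ = Real.exp ((k:ℕ)+1) * (((k:ℝ)+1) * k.factorial) := by
          rw [Real.exp_add]; push_cast; ring
      _ = Real.exp ((k+1:ℕ)) * ((k+1).factorial) := by
          rw [Nat.factorial_succ]; push_cast; ring

lemma choose_le_exp_bound (M k : ℕ) (hk : 0 < k) :
    (M.choose k : ℝ) ≤ (Real.exp 1 * M / k) ^ k := by
  have h1 : (M.choose k : ℝ) ≤ (M:ℝ)^k / k.factorial := by
    exact_mod_cast Nat.choose_le_pow_div k M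
  have hkf : (0:ℝ) < k.factorial := by exact_mod_cast k.factorial_pos
  have hkk : (0:ℝ) < (k:ℝ)^k := by positivity
  have h2 : (M:ℝ)^k / k.factorial ≤ Real.exp 1 ^ k * (M:ℝ)^k / (k:ℝ)^k := by
    rw [div_le_div_iff₀ hkf hkk]
    calc (M:ℝ)^k * (k:ℝ)^k ≤ (M:ℝ)^k * (Real.exp k * k.factorial) := by
          apply mul_le_mul_of_nonneg_left (pow_self_le_exp_mul_factorial k) (by positivity)
      _ = Real.exp 1 ^ k * (M:ℝ)^k * k.factorial := by
          rw [Real.exp_one_pow]; ring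
  calc (M.choose k : ℝ) ≤ (M:ℝ)^k / k.factorial := h1
    _ ≤ Real.exp 1 ^ k * (M:ℝ)^k / (k:ℝ)^k := h2
    _ = (Real.exp 1 * M / k)^k := by rw [div_pow, mul_pow]

-- a bad set has at least 9 elements
lemma bad_card_ge {n : ℕ} (ω : Fin n → Fin n → Bool) (S : Finset (Fin n)) (hne : S.Nonempty)
    (h4 : 4 * S.card ≤ inducedEdges (erAdj ω) S) : 9 ≤ S.card := by
  set F := (univ.filter fun e : Fin n × Fin n =>
    e.1 ∈ S ∧ e.2 ∈ S ∧ e.1 ≤ e.2 ∧ erAdj ω e.1 e.2) with hF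
  have hlt : ∀ e ∈ F, e.1 < e.2 := by
    intro e he
    simp only [hF, mem_filter] at he
    exact lt_of_le_of_ne he.2.2.2.1 he.2.2.2.2.1
  have hcard : F.card ≤ (S.powersetCard 2).card := by
    apply Finset.card_le_card_of_injOn (fun e => ({e.1, e.2} : Finset (Fin n)))
    · intro e he
      simp only [hF, Finset.mem_coe, mem_filter] at he
      rw [Finset.mem_coe, mem_powersetCard]
      refine ⟨?_, ?_⟩
      · intro x hx
        rcases mem_insert.mp hx with h | h
        · subst h; exact he.2.1
        · rw [mem_singleton] at h; subst h; exact he.2.2.1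
      · exact card_pair (he.2.2.2.2.1)
    · intro e he e' he' heq
      simp only at heq
      rw [Finset.mem_coe] at he he'
      have h1 := hlt e he
      have h2 := hlt e' he'
      have m1 : e.1 ∈ ({e'.1, e'.2} : Finset (Fin n)) := by rw [← heq]; simp
      have m2 : e.2 ∈ ({e'.1, e'.2} : Finset (Fin n)) := by rw [← heq]; simp
      simp only [mem_insert, mem_singleton] at m1 m2
      rcases m1 with h | h <;> rcases m2 with h' | h'
      · exact absurd (h.trans h'.symm) (ne_of_lt h1)
      · exact Prod.ext h h'
      · exact absurd rfl (ne_of_lt (((h1.trans_eq h').trans h2).trans_eq h.symm))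
      · exact absurd (h.trans h'.symm) (ne_of_lt h1)
  rw [card_powersetCard, Nat.choose_two_right] at hcard
  have h4' : 4 * S.card ≤ S.card * (S.card - 1) / 2 := le_trans h4 hcard
  have h8 : S.card * 8 ≤ S.card * (S.card - 1) := by
    calc S.card * 8 = 4 * S.card * 2 := by ring
      _ ≤ (S.card * (S.card - 1) / 2) * 2 := by exact Nat.mul_le_mul_right 2 h4'
      _ ≤ S.card * (S.card - 1) := Nat.div_mul_le_self _ _
  have hpos : 0 < S.card := card_pos.mpr hne
  have := Nat.le_of_mul_le_mul_left (by linarith [h8] : S.card * 8 ≤ S.card * (S.card - 1)) hpos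
  omega

lemma union_bound (n : ℕ) (p : ℝ) (h0 : 0 ≤ p) (h1 : p ≤ 1) :
    entriesMeasure n p {ω | ¬ locallySparse n (erAdj ω)} ≤
      ∑ j ∈ (Icc 9 n).filter (fun j : ℕ => (j:ℝ) ≤ (n:ℝ) / (Real.log n) ^ ((3:ℝ)/2)),
        (n.choose j : ℝ≥0∞) * ((j*j).choose (4*j) : ℝ≥0∞) * ENNReal.ofReal p ^ (4*j) := by
  classical
  set T := (Icc 9 n).filter (fun j : ℕ => (j:ℝ) ≤ (n:ℝ) / (Real.log n) ^ ((3:ℝ)/2)) with hT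
  set Bad := (univ : Finset (Finset (Fin n))).filter
    (fun S => 9 ≤ S.card ∧ (S.card:ℝ) ≤ (n:ℝ) / (Real.log n) ^ ((3:ℝ)/2)) with hBad
  -- inclusion of the event into a big union
  have hincl : {ω : Fin n → Fin n → Bool | ¬ locallySparse n (erAdj ω)} ⊆
      ⋃ S ∈ Bad, ⋃ E ∈ (S ×ˢ S).powersetCard (4 * S.card),
        {ω : Fin n → Fin n → Bool | ∀ e ∈ E, ω e.1 e.2 = true} := by
    intro ω hω
    simp only [Set.mem_setOf_eq, locallySparse, not_forall] at hω
    obtain ⟨S, hne, hcard, h4⟩ := hω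
    rw [not_lt] at h4
    have h9 := bad_card_ge ω S hne h4
    set F := (univ.filter fun e : Fin n × Fin n =>
      e.1 ∈ S ∧ e.2 ∈ S ∧ e.1 ≤ e.2 ∧ erAdj ω e.1 e.2) with hF
    obtain ⟨E, hES, hEcard⟩ := Finset.exists_subset_card_eq (h4 : 4 * S.card ≤ F.card)
    simp only [Set.mem_iUnion]
    refine ⟨S, ?_, E, ?_, ?_⟩
    · simp only [hBad, mem_filter, mem_univ, true_and]; exact ⟨h9, hcard⟩
    · rw [mem_powersetCard]
      refine ⟨?_, hEcard⟩
      intro e he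
      have := hES he
      simp only [hF, mem_filter] at this
      exact mem_product.mpr ⟨this.2.1, this.2.2.1⟩
    · intro e he
      have := hES he
      simp only [hF, mem_filter] at this
      have hle := this.2.2.2.1
      have := this.2.2.2.2.2
      rwa [if_pos hle] at this
  calc entriesMeasure n p {ω | ¬ locallySparse n (erAdj ω)}
      ≤ entriesMeasure n p (⋃ S ∈ Bad, ⋃ E ∈ (S ×ˢ S).powersetCard (4 * S.card),
          {ω : Fin n → Fin n → Bool | ∀ e ∈ E, ω e.1 e.2 = true}) := measure_mono hincl
    _ ≤ ∑ S ∈ Bad, entriesMeasure n p (⋃ E ∈ (S ×ˢ S).powersetCard (4 * S.card),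
          {ω : Fin n → Fin n → Bool | ∀ e ∈ E, ω e.1 e.2 = true}) := measure_biUnion_finset_le _ _
    _ ≤ ∑ S ∈ Bad, ((S.card * S.card).choose (4 * S.card) : ℝ≥0∞) * ENNReal.ofReal p ^ (4 * S.card) := by
          apply Finset.sum_le_sum
          intro S hS
          calc entriesMeasure n p (⋃ E ∈ (S ×ˢ S).powersetCard (4 * S.card),
                {ω : Fin n → Fin n → Bool | ∀ e ∈ E, ω e.1 e.2 = true})
              ≤ ∑ E ∈ (S ×ˢ S).powersetCard (4 * S.card),
                entriesMeasure n p {ω : Fin n → Fin n → Bool | ∀ e ∈ E, ω e.1 e.2 = true} :=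
                measure_biUnion_finset_le _ _
            _ = ∑ E ∈ (S ×ˢ S).powersetCard (4 * S.card), ENNReal.ofReal p ^ (4 * S.card) := by
                apply Finset.sum_congr rfl
                intro E hE
                rw [cyl_measure n p h0 h1 E, (mem_powersetCard.mp hE).2]
            _ = (((S ×ˢ S).card).choose (4 * S.card) : ℝ≥0∞) * ENNReal.ofReal p ^ (4 * S.card) := by
                rw [Finset.sum_const, card_powersetCard, nsmul_eq_mul]
            _ = ((S.card * S.card).choose (4 * S.card) : ℝ≥0∞) * ENNReal.ofReal p ^ (4 * S.card) := by
                rw [card_product]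
    _ = ∑ j ∈ T, ∑ S ∈ Bad.filter (fun S => S.card = j),
          ((S.card * S.card).choose (4 * S.card) : ℝ≥0∞) * ENNReal.ofReal p ^ (4 * S.card) := by
          rw [Finset.sum_fiberwise_of_maps_to]
          intro S hS
          simp only [hBad, mem_filter, mem_univ, true_and] at hS
          simp only [hT, mem_filter, mem_Icc]
          exact ⟨⟨hS.1, le_trans (card_le_univ S) (by simp)⟩, hS.2⟩
    _ ≤ ∑ j ∈ T, (n.choose j : ℝ≥0∞) * ((j*j).choose (4*j) : ℝ≥0∞) * ENNReal.ofReal p ^ (4*j) := by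
          apply Finset.sum_le_sum
          intro j hj
          have hsum : ∑ S ∈ Bad.filter (fun S => S.card = j),
              ((S.card * S.card).choose (4 * S.card) : ℝ≥0∞) * ENNReal.ofReal p ^ (4 * S.card)
              = (Bad.filter (fun S => S.card = j)).card •
                (((j*j).choose (4*j) : ℝ≥0∞) * ENNReal.ofReal p ^ (4*j)) := by
            rw [← Finset.sum_const]
            apply Finset.sum_congr rfl
            intro S hS
            rw [(mem_filter.mp hS).2]
          rw [hsum, nsmul_eq_mul, ← mul_assoc]
          apply mul_le_mul_left
          apply mul_le_mul_left
          have : Bad.filter (fun S => S.card = j) ⊆ (univ : Finset (Fin n)).powersetCard j := by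
            intro S hS
            rw [mem_powersetCard]
            exact ⟨subset_univ S, (mem_filter.mp hS).2⟩
          have hle := Finset.card_le_card this
          rw [card_powersetCard, card_univ, Fintype.card_fin] at hle
          exact_mod_cast hle

noncomputable def Kc (c : ℝ) : ℝ := (Real.exp 1)^5 * c^4 / 256

def GoodX (c x : ℝ) : Prop :=
  3 ≤ x ∧ 1 ≤ Real.log x ∧ c * Real.log x ≤ x ∧
  Kc c * (Real.log x)^4 ≤ x ^ ((7:ℝ)/36) ∧
  Kc c ≤ (1/2) * (Real.log x) ^ ((1:ℝ)/2) ∧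
  5 * Real.log x ≤ x ^ ((3:ℝ)/4) * Real.log 2

lemma eventually_goodX (c : ℝ) (hc : 0 < c) : ∀ᶠ x : ℝ in atTop, GoodX c x := by
  have hK : 0 < Kc c := by unfold Kc; positivity
  have h1 : ∀ᶠ x : ℝ in atTop, (3:ℝ) ≤ x := eventually_ge_atTop 3
  have h2 : ∀ᶠ x : ℝ in atTop, 1 ≤ Real.log x :=
    Real.tendsto_log_atTop.eventually_ge_atTop 1
  have h3 : ∀ᶠ x : ℝ in atTop, c * Real.log x ≤ x := by
    have := (Real.isLittleO_log_id_atTop.bound (show (0:ℝ) < 1/c by positivity))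
    filter_upwards [this, eventually_ge_atTop (1:ℝ)] with x hx hx1
    rw [Real.norm_eq_abs, Real.norm_eq_abs, id_eq] at hx
    rw [abs_of_nonneg (Real.log_nonneg hx1), abs_of_nonneg (by linarith)] at hx
    calc c * Real.log x ≤ c * ((1/c) * x) := by
          apply mul_le_mul_of_nonneg_left hx hc.le
      _ = x := by field_simp
  have h4 : ∀ᶠ x : ℝ in atTop, Kc c * (Real.log x)^4 ≤ x ^ ((7:ℝ)/36) := by
    have hlo := (isLittleO_log_rpow_rpow_atTop 4 (show (0:ℝ) < 7/36 by norm_num)).bound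
      (show (0:ℝ) < 1 / Kc c by positivity)
    filter_upwards [hlo, eventually_ge_atTop (1:ℝ)] with x hx hx1
    rw [Real.norm_eq_abs, Real.norm_eq_abs] at hx
    have hl0 : 0 ≤ Real.log x := Real.log_nonneg hx1
    have hx0 : (0:ℝ) ≤ x := by linarith
    rw [abs_of_nonneg (Real.rpow_nonneg hl0 _), abs_of_nonneg (Real.rpow_nonneg hx0 _)] at hx
    have : (Real.log x)^(4:ℕ) = (Real.log x) ^ ((4:ℝ)) := by
      rw [← Real.rpow_natCast (Real.log x) 4]; norm_num
    rw [this]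
    calc Kc c * Real.log x ^ ((4:ℝ)) ≤ Kc c * ((1/Kc c) * x ^ ((7:ℝ)/36)) := by
          apply mul_le_mul_of_nonneg_left hx hK.le
      _ = x ^ ((7:ℝ)/36) := by field_simp
  have h5 : ∀ᶠ x : ℝ in atTop, Kc c ≤ (1/2) * (Real.log x) ^ ((1:ℝ)/2) := by
    have ht : Tendsto (fun x : ℝ => (Real.log x) ^ ((1:ℝ)/2)) atTop atTop :=
      (tendsto_rpow_atTop (by norm_num)).comp Real.tendsto_log_atTop
    filter_upwards [ht.eventually_ge_atTop (2 * Kc c)] with x hx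
    linarith
  have h6 : ∀ᶠ x : ℝ in atTop, 5 * Real.log x ≤ x ^ ((3:ℝ)/4) * Real.log 2 := by
    have hlo := (isLittleO_log_rpow_atTop (show (0:ℝ) < 3/4 by norm_num)).bound
      (show (0:ℝ) < Real.log 2 / 5 by positivity)
    filter_upwards [hlo, eventually_ge_atTop (1:ℝ)] with x hx hx1
    rw [Real.norm_eq_abs, Real.norm_eq_abs] at hx
    have hx0 : (0:ℝ) ≤ x := by linarith
    rw [abs_of_nonneg (Real.log_nonneg hx1), abs_of_nonneg (Real.rpow_nonneg hx0 _)] at hx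
    nlinarith [Real.log_pos (show (1:ℝ) < 2 by norm_num)]
  filter_upwards [h1, h2, h3, h4, h5, h6] with x a b d e f g
  exact ⟨a, b, d, e, f, g⟩

lemma term_bound (c : ℝ) (hc : 0 < c) (n j : ℕ) (hg : GoodX c n) (hj9 : 9 ≤ j)
    (hjle : (j:ℝ) ≤ (n:ℝ) / (Real.log n) ^ ((3:ℝ)/2)) :
    (n.choose j : ℝ) * ((j*j).choose (4*j) : ℝ) * (c * Real.log n / n) ^ (4*j)
      ≤ (n:ℝ) ^ (-(5:ℝ)) := by
  obtain ⟨hx3, hL1, hcL, hA4, hA5, hA6⟩ := hg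
  set x := (n:ℝ) with hxdef
  set L := Real.log x with hLdef
  set p := c * L / x with hpdef
  have hx0 : (0:ℝ) < x := by linarith
  have hx1 : (1:ℝ) ≤ x := by linarith
  have hL0 : (0:ℝ) < L := by linarith
  have hj0 : 0 < j := by omega
  have hjR : (9:ℝ) ≤ (j:ℝ) := by exact_mod_cast hj9
  have hjpos : (0:ℝ) < (j:ℝ) := by linarith
  have hp0 : 0 ≤ p := by positivity
  have he1 : (0:ℝ) < Real.exp 1 := Real.exp_pos 1
  -- choose bounds
  have c1 : (n.choose j : ℝ) ≤ (Real.exp 1 * x / j) ^ j := choose_le_exp_bound n j hj0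
  have c2 : ((j*j).choose (4*j) : ℝ) ≤ (Real.exp 1 * (j:ℝ) / 4) ^ (4*j) := by
    have := choose_le_exp_bound (j*j) (4*j) (by omega)
    have heq : (Real.exp 1 * ((j*j : ℕ):ℝ) / ((4*j : ℕ):ℝ)) = Real.exp 1 * (j:ℝ) / 4 := by
      push_cast; field_simp
    rwa [heq] at this
  set B : ℝ := (Real.exp 1 * x / j) * ((Real.exp 1 * (j:ℝ) / 4) * p) ^ 4 with hBdef
  have hB0 : 0 ≤ B := by positivity
  have hmain : (n.choose j : ℝ) * ((j*j).choose (4*j) : ℝ) * p ^ (4*j) ≤ B ^ j := by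
    have step : (n.choose j : ℝ) * ((j*j).choose (4*j) : ℝ) * p ^ (4*j)
        ≤ (Real.exp 1 * x / j) ^ j * (Real.exp 1 * (j:ℝ) / 4) ^ (4*j) * p ^ (4*j) := by
      apply mul_le_mul_of_nonneg_right _ (by positivity)
      apply mul_le_mul c1 c2 (by positivity) (by positivity)
    calc (n.choose j : ℝ) * ((j*j).choose (4*j) : ℝ) * p ^ (4*j)
        ≤ (Real.exp 1 * x / j) ^ j * (Real.exp 1 * (j:ℝ) / 4) ^ (4*j) * p ^ (4*j) := step
      _ = (Real.exp 1 * x / j) ^ j * ((Real.exp 1 * (j:ℝ) / 4) * p) ^ (4*j) := by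
          rw [mul_pow, mul_assoc]
      _ = (Real.exp 1 * x / j) ^ j * (((Real.exp 1 * (j:ℝ) / 4) * p) ^ 4) ^ j := by
          rw [← pow_mul]
      _ = B ^ j := by rw [← mul_pow]
  have hBval : B = Kc c * (j:ℝ)^3 * L^4 / x^3 := by
    rw [hBdef, hpdef]
    unfold Kc
    field_simp
    norm_num
  -- now bound B^j ≤ x^(-5) in two cases
  have hfinal : B ^ j ≤ x ^ (-(5:ℝ)) := by
    rcases le_or_gt (j:ℝ) (x ^ ((3:ℝ)/4)) with hcase | hcase
    · -- small j
      have hBle : B ≤ x ^ (-(5:ℝ)/9) := by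
        have h1 : (j:ℝ)^3 ≤ (x ^ ((3:ℝ)/4))^3 :=
          pow_le_pow_left₀ hjpos.le hcase 3
        have h2 : (x ^ ((3:ℝ)/4))^(3:ℕ) = x ^ ((9:ℝ)/4) := by
          rw [← Real.rpow_natCast (x ^ ((3:ℝ)/4)) 3, ← Real.rpow_mul hx0.le]
          norm_num
        have h3 : B ≤ Kc c * L^4 * x ^ ((9:ℝ)/4) / x^3 := by
          rw [hBval]
          apply div_le_div_of_nonneg_right _ (by positivity)
          calc Kc c * (j:ℝ)^3 * L^4 ≤ Kc c * (x ^ ((3:ℝ)/4))^3 * L^4 := by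
                apply mul_le_mul_of_nonneg_right _ (by positivity)
                apply mul_le_mul_of_nonneg_left h1 (by unfold Kc; positivity)
            _ = Kc c * L^4 * x ^ ((9:ℝ)/4) := by rw [h2]; ring
        have hxx : x ^ ((9:ℝ)/4) / x^(3:ℕ) = x ^ (-(3:ℝ)/4) := by
          rw [← Real.rpow_natCast x 3, ← Real.rpow_sub hx0]
          norm_num
        have h4 : Kc c * L^4 * x ^ ((9:ℝ)/4) / x^3 = (Kc c * L^4) * x ^ (-(3:ℝ)/4) := by
          rw [← hxx]; ring
        calc B ≤ (Kc c * L^4) * x ^ (-(3:ℝ)/4) := by rw [← h4]; exact h3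
          _ ≤ x ^ ((7:ℝ)/36) * x ^ (-(3:ℝ)/4) := by
              apply mul_le_mul_of_nonneg_right hA4 (by positivity)
          _ = x ^ (-(5:ℝ)/9) := by
              rw [← Real.rpow_add hx0]; norm_num
      calc B ^ j ≤ (x ^ (-(5:ℝ)/9)) ^ j := pow_le_pow_left₀ hB0 hBle j
        _ = x ^ (-(5:ℝ)/9 * j) := by
            rw [← Real.rpow_natCast (x ^ (-(5:ℝ)/9)) j, ← Real.rpow_mul hx0.le]
        _ ≤ x ^ (-(5:ℝ)) := by
            apply Real.rpow_le_rpow_of_exponent_le hx1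
            nlinarith
    · -- large j
      have hBle : B ≤ 1/2 := by
        have hL32 : (0:ℝ) < L ^ ((3:ℝ)/2) := Real.rpow_pos_of_pos hL0 _
        have h1 : (j:ℝ)^3 ≤ (x / L ^ ((3:ℝ)/2))^3 := pow_le_pow_left₀ hjpos.le hjle 3
        have h2 : (x / L ^ ((3:ℝ)/2))^(3:ℕ) = x^3 / L ^ ((9:ℝ)/2) := by
          rw [div_pow, ← Real.rpow_natCast (L ^ ((3:ℝ)/2)) 3, ← Real.rpow_mul hL0.le]
          norm_num
        have h3 : B ≤ Kc c * L^4 / L ^ ((9:ℝ)/2) := by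
          rw [hBval]
          calc Kc c * (j:ℝ)^3 * L^4 / x^3 ≤ Kc c * (x^3 / L ^ ((9:ℝ)/2)) * L^4 / x^3 := by
                apply div_le_div_of_nonneg_right _ (by positivity)
                apply mul_le_mul_of_nonneg_right _ (by positivity)
                apply mul_le_mul_of_nonneg_left (h1.trans_eq h2) (by unfold Kc; positivity)
            _ = Kc c * L^4 / L ^ ((9:ℝ)/2) := by field_simp
        have hLL : L^(4:ℕ) / L ^ ((9:ℝ)/2) = (L ^ ((1:ℝ)/2))⁻¹ := by
          rw [← Real.rpow_natCast L 4, ← Real.rpow_sub hL0]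
          rw [show ((4:ℕ):ℝ) - 9/2 = -(1/2) by norm_num, Real.rpow_neg hL0.le]
        have h4 : Kc c * L^4 / L ^ ((9:ℝ)/2) = Kc c / L ^ ((1:ℝ)/2) := by
          rw [div_eq_mul_inv (Kc c), ← hLL]; ring
        have h5 : Kc c / L ^ ((1:ℝ)/2) ≤ 1/2 := by
          rw [div_le_iff₀ (Real.rpow_pos_of_pos hL0 _)]
          linarith
        calc B ≤ Kc c * L^4 / L ^ ((9:ℝ)/2) := h3
          _ = Kc c / L ^ ((1:ℝ)/2) := h4
          _ ≤ 1/2 := h5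
      have hx5 : x ^ ((5:ℝ)) ≤ (2:ℝ) ^ (x ^ ((3:ℝ)/4)) := by
        have hlog : Real.log (x ^ ((5:ℝ))) ≤ Real.log ((2:ℝ) ^ (x ^ ((3:ℝ)/4))) := by
          rw [Real.log_rpow hx0, Real.log_rpow (by norm_num : (0:ℝ) < 2)]
          calc (5:ℝ) * L ≤ x ^ ((3:ℝ)/4) * Real.log 2 := hA6
            _ = x ^ ((3:ℝ)/4) * Real.log 2 := rfl
        have h2pos : (0:ℝ) < (2:ℝ) ^ (x ^ ((3:ℝ)/4)) := Real.rpow_pos_of_pos (by norm_num) _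
        have hxpos : (0:ℝ) < x ^ ((5:ℝ)) := Real.rpow_pos_of_pos hx0 _
        exact (Real.log_le_log_iff hxpos h2pos).mp hlog
      calc B ^ j ≤ (1/2 : ℝ) ^ j := pow_le_pow_left₀ hB0 hBle j
        _ = (2:ℝ) ^ (-(j:ℝ)) := by
            rw [Real.rpow_neg (by norm_num), Real.rpow_natCast]
            simp [one_div, inv_pow]
        _ ≤ (2:ℝ) ^ (-(x ^ ((3:ℝ)/4))) := by
            apply Real.rpow_le_rpow_of_exponent_le (by norm_num)
            linarith
        _ ≤ x ^ (-(5:ℝ)) := by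
            rw [Real.rpow_neg (by norm_num : (0:ℝ) ≤ 2), Real.rpow_neg hx0.le]
            apply inv_anti₀ (Real.rpow_pos_of_pos hx0 _)
            exact hx5
  exact hmain.trans hfinal

lemma real_sum_bound (c : ℝ) (hc : 0 < c) (n : ℕ) (hg : GoodX c n) :
    ∑ j ∈ (Icc 9 n).filter (fun j : ℕ => (j:ℝ) ≤ (n:ℝ) / (Real.log n) ^ ((3:ℝ)/2)),
      (n.choose j : ℝ) * ((j*j).choose (4*j) : ℝ) * (c * Real.log n / n) ^ (4*j)
      ≤ 1 / (n:ℝ) ^ (4:ℕ) := by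
  set x := (n:ℝ) with hxdef
  have hx0 : (0:ℝ) < x := by have := hg.1; linarith
  set T := (Icc 9 n).filter (fun j : ℕ => (j:ℝ) ≤ x / (Real.log x) ^ ((3:ℝ)/2)) with hT
  have hterm : ∀ j ∈ T, (n.choose j : ℝ) * ((j*j).choose (4*j) : ℝ)
      * (c * Real.log x / x) ^ (4*j) ≤ x ^ (-(5:ℝ)) := by
    intro j hj
    simp only [hT, mem_filter, mem_Icc] at hj
    exact term_bound c hc n j hg hj.1.1 hj.2
  calc ∑ j ∈ T, (n.choose j : ℝ) * ((j*j).choose (4*j) : ℝ) * (c * Real.log x / x) ^ (4*j)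
      ≤ T.card • x ^ (-(5:ℝ)) := Finset.sum_le_card_nsmul T _ _ hterm
    _ = (T.card : ℝ) * x ^ (-(5:ℝ)) := nsmul_eq_mul _ _
    _ ≤ x * x ^ (-(5:ℝ)) := by
        apply mul_le_mul_of_nonneg_right _ (Real.rpow_nonneg hx0.le _)
        have h1 : T.card ≤ (Icc 9 n).card := card_le_card (filter_subset _ _)
        rw [Nat.card_Icc] at h1
        have h2 : T.card ≤ n := by omega
        rw [hxdef]
        exact_mod_cast h2
    _ = x ^ (-(4:ℝ)) := by
        nth_rewrite 1 [← Real.rpow_one x]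
        rw [← Real.rpow_add hx0]; norm_num
    _ = 1 / x ^ (4:ℕ) := by
        rw [Real.rpow_neg hx0.le, one_div, ← Real.rpow_natCast x 4]; norm_num


end SparsenessAux

/-- Lemma `sparseness`: for any fixed constant `c > 0`, the
probability that `G(n, c ln n / n)` is not locally sparse is `O(n^{-4})`. -/
theorem sparseness (c : ℝ) (hc : 0 < c) :
    ∃ C : ℝ, ∃ N : ℕ, ∀ n ≥ N,
      entriesMeasure n (c * Real.log n / n) {ω | ¬ locallySparse n (erAdj ω)}
      ≤ ENNReal.ofReal (C / (n : ℝ) ^ (4 : ℕ)) := by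
  refine ⟨1, ?_⟩
  have hev : ∀ᶠ n : ℕ in Filter.atTop, GoodX c (n:ℝ) :=
    (tendsto_natCast_atTop_atTop).eventually (eventually_goodX c hc)
  obtain ⟨N, hN⟩ := Filter.eventually_atTop.mp hev
  refine ⟨N, ?_⟩
  intro n hn
  have hg := hN n hn
  obtain ⟨hx3, hL1, hcL, -, -, -⟩ := hg
  have hx0 : (0:ℝ) < (n:ℝ) := by linarith
  set p := c * Real.log n / n with hp
  have h0 : 0 ≤ p := by
    apply div_nonneg _ hx0.le
    nlinarith
  have h1 : p ≤ 1 := by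
    rw [hp, div_le_one hx0]
    exact hcL
  calc entriesMeasure n p {ω | ¬ locallySparse n (erAdj ω)}
      ≤ ∑ j ∈ (Icc 9 n).filter (fun j : ℕ => (j:ℝ) ≤ (n:ℝ) / (Real.log n) ^ ((3:ℝ)/2)),
        (n.choose j : ENNReal) * ((j*j).choose (4*j) : ENNReal) * ENNReal.ofReal p ^ (4*j) :=
        union_bound n p h0 h1
    _ = ENNReal.ofReal (∑ j ∈ (Icc 9 n).filter
          (fun j : ℕ => (j:ℝ) ≤ (n:ℝ) / (Real.log n) ^ ((3:ℝ)/2)),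
          (n.choose j : ℝ) * ((j*j).choose (4*j) : ℝ) * p ^ (4*j)) := by
        rw [ENNReal.ofReal_sum_of_nonneg (fun j _ => by positivity)]
        apply Finset.sum_congr rfl
        intro j hj
        rw [ENNReal.ofReal_mul (by positivity), ENNReal.ofReal_mul (by positivity),
          ENNReal.ofReal_natCast, ENNReal.ofReal_natCast, ENNReal.ofReal_pow h0]
    _ ≤ ENNReal.ofReal (1 / (n:ℝ) ^ (4:ℕ)) := by
        apply ENNReal.ofReal_le_ofReal
        exact real_sum_bound c hc n (hN n hn)
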